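/- Let k be a field and E = k[X₁,…,X_m,Y,Z,T]/(X₁^{r₁}⋯X_m^{r_m}Y − f(Z,T)) with f ≠ 0, m ≥ 2, r_j > 1. Then for every λ ∈ k*, the element x₂ − λ (image of X₂ − λ) is a prime element of E, and E/(x₂−λ)E ≅ k[X₁,X₃,…,X_m,Y,Z,T]/(λ^{r₂}X₁^{r₁}X₃^{r₃}⋯X_m^{r_m}Y − f(Z,T)). -/

import Mathlib

open MvPolynomial

variable {k : Type*} [Field k] {m : ℕ}

/-- The relation `X₁^{r₁}⋯X_m^{r_m}·Y − f(Z,T)`; here `Sum.inr 0 = Y`,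
`Sum.inr 1 = Z`, `Sum.inr 2 = T`. -/
noncomputable def asanumaRel (r : Fin m → ℕ) (f : MvPolynomial (Fin 2) k) :
    MvPolynomial (Fin m ⊕ Fin 3) k :=
  (∏ j : Fin m, X (Sum.inl j) ^ r j) * X (Sum.inr 0)
    - rename (fun i : Fin 2 => (Sum.inr i.succ : Fin m ⊕ Fin 3)) f

/-- The ring `E = k[X₁,…,X_m,Y,Z,T]/(X₁^{r₁}⋯X_m^{r_m}·Y − f(Z,T))`. -/
abbrev AsanumaRing (k : Type*) [Field k] {m : ℕ} (r : Fin m → ℕ)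
    (f : MvPolynomial (Fin 2) k) :=
  MvPolynomial (Fin m ⊕ Fin 3) k ⧸ Ideal.span {asanumaRel r f}

/-- The analogous relation `λ^{r₂}·X₁^{r₁}X₃^{r₃}⋯X_m^{r_m}·Y − f(Z,T)` with the
variable `X₂` removed. -/
noncomputable def asanumaRelDrop (r : Fin m → ℕ) (j₂ : Fin m) (lam : k)
    (f : MvPolynomial (Fin 2) k) :
    MvPolynomial ({i : Fin m // i ≠ j₂} ⊕ Fin 3) k :=
  C (lam ^ r j₂) * (∏ i : {i : Fin m // i ≠ j₂}, X (Sum.inl i) ^ r i.val)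
      * X (Sum.inr 0)
    - rename (fun i : Fin 2 => (Sum.inr i.succ : {i : Fin m // i ≠ j₂} ⊕ Fin 3)) f

/-! ### Auxiliary lemmas -/

section Aux

variable {k : Type*} [Field k]

/-- Kernel of an algebra map between polynomial rings that admits a section,
with the discrepancy on generators lying in a span. -/
lemma mv_ker_eq_span {σ τ : Type*}
    (ψ : MvPolynomial σ k →ₐ[k] MvPolynomial τ k)
    (ι : MvPolynomial τ k →ₐ[k] MvPolynomial σ k)
    (G : Set (MvPolynomial σ k))
    (h2 : ∀ i, X i - ι (ψ (X i)) ∈ Ideal.span G)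
    (h3 : ∀ g ∈ G, ψ g = 0) :
    RingHom.ker ψ = Ideal.span G := by
  have key : ∀ p, p - ι (ψ p) ∈ Ideal.span G := by
    have hcomp : (Ideal.Quotient.mkₐ k (Ideal.span G)).comp (ι.comp ψ)
        = Ideal.Quotient.mkₐ k (Ideal.span G) := by
      apply MvPolynomial.algHom_ext
      intro i
      simp only [AlgHom.comp_apply, Ideal.Quotient.mkₐ_eq_mk]
      rw [Ideal.Quotient.mk_eq_mk_iff_sub_mem]
      simpa using (Ideal.span G).neg_mem (h2 i)
    intro p
    have hp := DFunLike.congr_fun hcomp p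
    simp only [AlgHom.comp_apply, Ideal.Quotient.mkₐ_eq_mk] at hp
    rw [← Ideal.Quotient.mk_eq_mk_iff_sub_mem]
    exact hp.symm
  apply le_antisymm
  · intro p hp
    have hψ : ψ p = 0 := hp
    have h := key p
    rwa [hψ, map_zero, sub_zero] at h
  · rw [Ideal.span_le]
    intro g hg
    exact RingHom.mem_ker.mpr (h3 g hg)

/-- `X v - C c` is a prime element of a polynomial ring over a field. -/
lemma prime_X_sub_C_mv {σ : Type*} [DecidableEq σ] (v : σ) (c : k) :
    Prime (X v - C c : MvPolynomial σ k) := by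
  let ψ : MvPolynomial σ k →ₐ[k] MvPolynomial {w : σ // w ≠ v} k :=
    aeval (fun w => if h : w = v then C c else X ⟨w, h⟩)
  let ι : MvPolynomial {w : σ // w ≠ v} k →ₐ[k] MvPolynomial σ k :=
    rename Subtype.val
  have hψX : ∀ w : σ, ψ (X w) = if h : w = v then C c else X ⟨w, h⟩ := by
    intro w; simp [ψ]
  have hker : RingHom.ker ψ = Ideal.span {X v - C c} := by
    apply mv_ker_eq_span
    · intro i
      by_cases h : i = v
      · subst h
        rw [hψX, dif_pos rfl]
        have : ι (C c) = C c := by simp [ι]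
        rw [this]
        exact Ideal.subset_span rfl
      · rw [hψX, dif_neg h]
        simp [ι]
    · rintro g rfl
      rw [map_sub, hψX, dif_pos rfl]
      simp
  have hsurj : Function.Surjective ψ := by
    intro b
    refine ⟨ι b, ?_⟩
    show ψ (rename Subtype.val b) = b
    rw [show (ψ : MvPolynomial σ k →ₐ[k] _) = aeval
      (fun w => if h : w = v then C c else X ⟨w, h⟩) from rfl, aeval_rename]
    have : ((fun w => if h : w = v then C c else X ⟨w, h⟩) ∘ (Subtype.val :
        {w : σ // w ≠ v} → σ)) = X := by
      funext w
      simp only [Function.comp_apply, dif_neg w.2]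
    rw [this, aeval_X_left_apply]
  have e := Ideal.quotientKerAlgEquivOfSurjective hsurj
  replace e := (Ideal.quotientEquivAlgOfEq k hker.symm).trans e
  have hdom : IsDomain (MvPolynomial σ k ⧸ Ideal.span {X v - C c}) :=
    Function.Injective.isDomain e.toRingEquiv.toRingHom e.injective
  have hne : (X v - C c : MvPolynomial σ k) ≠ 0 := by
    intro h
    have h' : (X v : MvPolynomial σ k) = C c := sub_eq_zero.mp h
    have := congrArg totalDegree h'
    rw [totalDegree_X, totalDegree_C] at this
    exact one_ne_zero this
  exact (Ideal.span_singleton_prime hne).mp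
    ((Ideal.Quotient.isDomain_iff_prime _).mp hdom)

lemma prime_X_mv {σ : Type*} [DecidableEq σ] (v : σ) :
    Prime (X v : MvPolynomial σ k) := by
  simpa using prime_X_sub_C_mv (k := k) v 0

/-- A linear polynomial `C a * X - C b` with relatively prime coefficients is prime
over a UFD. -/
lemma prime_C_mul_X_sub_C {R : Type*} [CommRing R] [IsDomain R]
    [UniqueFactorizationMonoid R] {a b : R} (ha : a ≠ 0) (hab : IsRelPrime a b) :
    Prime (Polynomial.C a * Polynomial.X - Polynomial.C b) := by
  rw [← UniqueFactorizationMonoid.irreducible_iff_prime]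
  have hdeg : (Polynomial.C a * Polynomial.X - Polynomial.C b).degree = 1 := by
    rw [sub_eq_add_neg, ← Polynomial.C_neg]
    exact Polynomial.degree_linear ha
  have hprim : ∀ s₀ : R, Polynomial.C s₀ ∣ (Polynomial.C a * Polynomial.X
      - Polynomial.C b) → IsUnit s₀ := by
    intro s₀ h
    rw [Polynomial.C_dvd_iff_dvd_coeff] at h
    have h1 := h 1
    have h0 := h 0
    simp only [Polynomial.coeff_sub, Polynomial.coeff_C_mul, Polynomial.coeff_X_one,
      Polynomial.coeff_C, mul_one, if_neg one_ne_zero, sub_zero] at h1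
    simp only [Polynomial.coeff_sub, Polynomial.coeff_C_mul, Polynomial.coeff_X_zero,
      Polynomial.coeff_C, mul_zero, if_pos rfl, zero_sub] at h0
    exact hab h1 (dvd_neg.mp h0)
  constructor
  · intro hu
    have := Polynomial.degree_eq_zero_of_isUnit hu
    rw [hdeg] at this
    exact_mod_cast this
  · intro s t hst
    have hs0 : s ≠ 0 := by
      rintro rfl
      rw [zero_mul] at hst
      rw [hst] at hdeg
      simp at hdeg
    have ht0 : t ≠ 0 := by
      rintro rfl
      rw [mul_zero] at hst
      rw [hst] at hdeg
      simp at hdeg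
    have hnd : s.natDegree + t.natDegree = 1 := by
      have h1 : (s * t).natDegree = s.natDegree + t.natDegree :=
        Polynomial.natDegree_mul hs0 ht0
      rw [← hst] at h1
      rw [← h1]
      exact Polynomial.natDegree_eq_of_degree_eq_some hdeg
    rcases Nat.add_eq_one_iff.mp hnd with ⟨hs, _⟩ | ⟨_, ht⟩
    · left
      rw [Polynomial.eq_C_of_natDegree_eq_zero hs]
      refine Polynomial.isUnit_C.mpr (hprim _ ⟨t, ?_⟩)
      rw [← Polynomial.eq_C_of_natDegree_eq_zero hs]
      exact hst
    · right
      rw [Polynomial.eq_C_of_natDegree_eq_zero ht]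
      refine Polynomial.isUnit_C.mpr (hprim _ ⟨s, ?_⟩)
      rw [← Polynomial.eq_C_of_natDegree_eq_zero ht, hst, mul_comm]

lemma rename_eq_aeval' {σ τ : Type*} (u : σ → τ) (f : MvPolynomial σ k) :
    aeval (X ∘ u) f = rename u f := by
  conv_rhs => rw [← aeval_X_left_apply (rename u f), aeval_rename]

/-- `X v` does not divide a polynomial not involving `v` (image of a rename missing `v`). -/
lemma X_not_dvd_rename {σ τ : Type*} [DecidableEq τ] (u : σ → τ)
    (hu : Function.Injective u) (v : τ) (hv : ∀ i, u i ≠ v)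
    {f : MvPolynomial σ k} (hf : f ≠ 0) : ¬ X v ∣ rename u f := by
  rintro ⟨q, hq⟩
  let φ : MvPolynomial τ k →ₐ[k] MvPolynomial τ k :=
    aeval (fun w => if w = v then 0 else X w)
  have h1 : φ (rename u f) = rename u f := by
    show aeval _ (rename u f) = _
    rw [aeval_rename]
    have : ((fun w => if w = v then (0 : MvPolynomial τ k) else X w) ∘ u)
        = (X ∘ u) := by
      funext i
      simp [hv i]
    rw [this]
    exact rename_eq_aeval' u f
  have h2 : φ (X v) = 0 := by simp [φ]
  have h3 : rename u f = 0 := by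
    conv_lhs => rw [← h1, hq]
    rw [map_mul, h2, zero_mul]
  exact hf (rename_injective u hu (by rw [h3, map_zero]))

/-- `(σ ⊕ Fin (n+1)) ≃ Option (σ ⊕ Fin n)`, sending `Sum.inr 0` to `none`. -/
def sumFinSuccEquiv (σ : Type*) (n : ℕ) : (σ ⊕ Fin (n + 1)) ≃ Option (σ ⊕ Fin n) where
  toFun x := match x with
    | .inl s => some (.inl s)
    | .inr t => (finSuccEquiv n t).map .inr
  invFun x := match x with
    | none => .inr 0
    | some (.inl s) => .inl s
    | some (.inr t) => .inr t.succ
  left_inv := by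
    rintro (s | t)
    · rfl
    · refine Fin.cases ?_ (fun i => ?_) t
      · simp [finSuccEquiv_zero]
      · simp [finSuccEquiv_succ]
  right_inv := by
    rintro (_ | (s | t))
    · simp [finSuccEquiv_zero]
    · rfl
    · simp [finSuccEquiv_succ]

@[simp] lemma sumFinSuccEquiv_inl {σ : Type*} {n : ℕ} (s : σ) :
    sumFinSuccEquiv σ n (Sum.inl s) = some (Sum.inl s) := rfl

@[simp] lemma sumFinSuccEquiv_inr_zero {σ : Type*} {n : ℕ} :
    sumFinSuccEquiv σ n (Sum.inr 0) = none := by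
  show (finSuccEquiv n 0).map Sum.inr = none
  simp [finSuccEquiv_zero]

@[simp] lemma sumFinSuccEquiv_inr_succ {σ : Type*} {n : ℕ} (t : Fin n) :
    sumFinSuccEquiv σ n (Sum.inr t.succ) = some (Sum.inr t) := by
  show (finSuccEquiv n t.succ).map Sum.inr = _
  simp [finSuccEquiv_succ]

lemma optionEquivLeft_rename_some {κ : Type*} (p : MvPolynomial κ k) :
    optionEquivLeft k κ (rename some p) = Polynomial.C p := by
  have : (optionEquivLeft k κ).toAlgHom.comp (rename (some : κ → Option κ))
      = Polynomial.CAlgHom.comp (AlgHom.id k _) := by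
    apply MvPolynomial.algHom_ext
    intro i
    simp [optionEquivLeft_X_some, Polynomial.CAlgHom]
  have := DFunLike.congr_fun this p
  simpa [Polynomial.CAlgHom] using this

end Aux

/-! ### The substitution map killing the variable `X j₂` -/

section Drop

variable {k : Type*} [Field k] {m : ℕ}

/-- The substitution `X j₂ ↦ λ`. -/
noncomputable def dropHom (j₂ : Fin m) (lam : k) :
    MvPolynomial (Fin m ⊕ Fin 3) k →ₐ[k]
      MvPolynomial ({i : Fin m // i ≠ j₂} ⊕ Fin 3) k :=
  aeval (fun w => match w with
    | .inl i => if h : i = j₂ then C lam else X (.inl ⟨i, h⟩)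
    | .inr t => X (.inr t))

/-- The inclusion section of `dropHom`. -/
noncomputable def dropSec (j₂ : Fin m) :
    MvPolynomial ({i : Fin m // i ≠ j₂} ⊕ Fin 3) k →ₐ[k]
      MvPolynomial (Fin m ⊕ Fin 3) k :=
  rename (Sum.map Subtype.val id)

lemma dropHom_X_inl (j₂ : Fin m) (lam : k) (i : Fin m) :
    dropHom (k := k) j₂ lam (X (Sum.inl i))
      = if h : i = j₂ then C lam else X (Sum.inl ⟨i, h⟩) := by
  simp [dropHom]

lemma dropHom_X_inr (j₂ : Fin m) (lam : k) (t : Fin 3) :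
    dropHom (k := k) j₂ lam (X (Sum.inr t)) = X (Sum.inr t) := by
  simp [dropHom]

lemma dropHom_dropSec (j₂ : Fin m) (lam : k)
    (b : MvPolynomial ({i : Fin m // i ≠ j₂} ⊕ Fin 3) k) :
    dropHom j₂ lam (dropSec j₂ b) = b := by
  have : (dropHom (k := k) j₂ lam).comp (dropSec j₂) = AlgHom.id k _ := by
    apply MvPolynomial.algHom_ext
    rintro (⟨i, h⟩ | t)
    · simp [dropSec, dropHom_X_inl, dif_neg h]
    · simp [dropSec, dropHom_X_inr]
  exact DFunLike.congr_fun this b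

lemma dropHom_ker (j₂ : Fin m) (lam : k) :
    RingHom.ker (dropHom (k := k) j₂ lam)
      = Ideal.span {X (Sum.inl j₂) - C lam} := by
  apply mv_ker_eq_span _ (dropSec j₂)
  · rintro (i | t)
    · by_cases h : i = j₂
      · rw [h, dropHom_X_inl, dif_pos rfl]
        have : dropSec (k := k) j₂ (C lam) = C lam := by simp [dropSec]
        rw [this]
        exact Ideal.subset_span rfl
      · rw [dropHom_X_inl, dif_neg h]
        simp [dropSec]
    · rw [dropHom_X_inr]
      simp [dropSec]
  · rintro g rfl
    rw [map_sub, dropHom_X_inl, dif_pos rfl]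
    simp

lemma dropHom_rel (r : Fin m → ℕ) (j₂ : Fin m) (lam : k)
    (f : MvPolynomial (Fin 2) k) :
    dropHom j₂ lam (asanumaRel r f) = asanumaRelDrop r j₂ lam f := by
  classical
  have hprod : (∏ j : Fin m, (if h : j = j₂ then C lam
        else X (Sum.inl ⟨j, h⟩) : MvPolynomial ({i : Fin m // i ≠ j₂} ⊕ Fin 3) k) ^ r j)
      = C (lam ^ r j₂) * ∏ i : {i : Fin m // i ≠ j₂}, X (Sum.inl i) ^ r i.val := by
    rw [Fintype.prod_eq_mul_prod_compl j₂, dif_pos rfl, ← map_pow]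
    congr 1
    rw [Finset.prod_subtype (p := fun i => i ≠ j₂) ({j₂}ᶜ : Finset (Fin m))
      (fun x => by simp)
      (fun i => (if h : i = j₂ then C lam
        else X (Sum.inl (⟨i, h⟩ : {i : Fin m // i ≠ j₂}))) ^ r i)]
    refine Finset.prod_congr rfl fun i _ => ?_
    rw [dif_neg i.2]
  rw [asanumaRel, asanumaRelDrop, map_sub, map_mul, map_prod]
  congr 1
  · simp only [map_pow, dropHom_X_inl, dropHom_X_inr]
    rw [hprod, map_pow]
  · show (dropHom j₂ lam) ((rename fun i : Fin 2 => (Sum.inr i.succ : Fin m ⊕ Fin 3)) f) = _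
    rw [show (dropHom (k := k) j₂ lam : MvPolynomial (Fin m ⊕ Fin 3) k →ₐ[k] _)
      = aeval _ from rfl, aeval_rename]
    rw [← rename_eq_aeval']
    rfl

/-- The drop relation is a prime element. -/
lemma prime_relDrop (r : Fin m → ℕ) (j₂ : Fin m) {lam : k} (hlam : lam ≠ 0)
    {f : MvPolynomial (Fin 2) k} (hf : f ≠ 0) :
    Prime (asanumaRelDrop r j₂ lam f) := by
  classical
  set σs := {i : Fin m // i ≠ j₂}
  let E1 : MvPolynomial (σs ⊕ Fin 3) k ≃ₐ[k]
      Polynomial (MvPolynomial (σs ⊕ Fin 2) k) :=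
    (renameEquiv k (sumFinSuccEquiv σs 2)).trans (optionEquivLeft k (σs ⊕ Fin 2))
  rw [← MulEquiv.prime_iff E1.toRingEquiv.toMulEquiv]
  set a : MvPolynomial (σs ⊕ Fin 2) k :=
    C (lam ^ r j₂) * ∏ i : σs, X (Sum.inl i) ^ r i.val with ha_def
  set b : MvPolynomial (σs ⊕ Fin 2) k := rename Sum.inr f with hb_def
  have hE1 : E1 (asanumaRelDrop r j₂ lam f) = Polynomial.C a * Polynomial.X - Polynomial.C b := by
    rw [asanumaRelDrop, map_sub, map_mul, map_mul]
    congr 1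
    · have hC : E1 (C (lam ^ r j₂) : MvPolynomial (σs ⊕ Fin 3) k)
          = Polynomial.C (C (lam ^ r j₂)) := by
        simp [E1, optionEquivLeft_C]
      have hP : E1 (∏ i : σs, X (Sum.inl i) ^ r i.val)
          = Polynomial.C (∏ i : σs, X (Sum.inl i) ^ r i.val) := by
        rw [map_prod, map_prod]
        apply Finset.prod_congr rfl
        intro i _
        rw [map_pow, map_pow]
        congr 1
        simp [E1, renameEquiv_apply, optionEquivLeft_X_some]
      have hY : E1 (X (Sum.inr 0) : MvPolynomial (σs ⊕ Fin 3) k) = Polynomial.X := by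
        simp [E1, renameEquiv_apply, optionEquivLeft_X_none]
      rw [hC, hP, hY, ← Polynomial.C_mul]
    · show E1 ((rename fun i : Fin 2 => (Sum.inr i.succ : σs ⊕ Fin 3)) f) = _
      rw [hb_def]
      show (optionEquivLeft k (σs ⊕ Fin 2)) ((renameEquiv k (sumFinSuccEquiv σs 2))
        ((rename fun i : Fin 2 => (Sum.inr i.succ : σs ⊕ Fin 3)) f)) = _
      rw [renameEquiv_apply, rename_rename]
      have : ((sumFinSuccEquiv σs 2 : (σs ⊕ Fin 3) → Option (σs ⊕ Fin 2)) ∘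
          fun i : Fin 2 => (Sum.inr i.succ : σs ⊕ Fin 3))
          = (some ∘ (Sum.inr : Fin 2 → σs ⊕ Fin 2)) := by
        funext i
        simp
      rw [this, ← rename_rename, optionEquivLeft_rename_some]
  have hE1' : E1.toRingEquiv.toMulEquiv (asanumaRelDrop r j₂ lam f)
      = Polynomial.C a * Polynomial.X - Polynomial.C b := hE1
  rw [hE1']
  have ha : a ≠ 0 := by
    apply mul_ne_zero
    · simpa using pow_ne_zero (r j₂) hlam
    · apply Finset.prod_ne_zero_iff.mpr
      intro i _
      exact pow_ne_zero _ (X_ne_zero _)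
  apply prime_C_mul_X_sub_C ha
  rw [ha_def]
  apply IsRelPrime.mul_left
  · intro d hd _
    apply isUnit_of_dvd_unit hd
    exact ((pow_ne_zero (r j₂) hlam).isUnit).map (C : k →+* _)
  · apply IsRelPrime.prod_left
    intro i _
    apply IsRelPrime.pow_left
    refine (prime_X_mv (Sum.inl i)).irreducible.isRelPrime_iff_not_dvd.mpr ?_
    exact X_not_dvd_rename Sum.inr Sum.inr_injective _ (fun j => by simp) hf

end Drop

/-- For `E = k[X₁,…,X_m,Y,Z,T]/(X₁^{r₁}⋯X_m^{r_m}Y − f(Z,T))` (assumed a domain)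
with `m ≥ 2` and `f ≠ 0`, for every `λ ∈ k*` the element `x₂ − λ` is prime in `E`
and `E/(x₂−λ) ≅ k[X₁,X₃,…,X_m,Y,Z,T]/(λ^{r₂}X₁^{r₁}X₃^{r₃}⋯X_m^{r_m}Y − f)`. -/
theorem asanuma_ring_mod_x2_sub_lambda
    (hm : 1 < m) (r : Fin m → ℕ) (hr : ∀ j, 1 < r j)
    (f : MvPolynomial (Fin 2) k) (hf : f ≠ 0)
    (hdom : IsDomain (AsanumaRing k r f))
    (lam : k) (hlam : lam ≠ 0) :
    Prime (Ideal.Quotient.mk (Ideal.span {asanumaRel r f})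
        (X (Sum.inl ⟨1, hm⟩) - C lam) : AsanumaRing k r f) ∧
    Nonempty ((AsanumaRing k r f ⧸
        Ideal.span {(Ideal.Quotient.mk (Ideal.span {asanumaRel r f})
          (X (Sum.inl ⟨1, hm⟩) - C lam) : AsanumaRing k r f)})
      ≃ₐ[k] (MvPolynomial ({i : Fin m // i ≠ ⟨1, hm⟩} ⊕ Fin 3) k ⧸
        Ideal.span {asanumaRelDrop r ⟨1, hm⟩ lam f})) := by
  classical
  set j₂ : Fin m := ⟨1, hm⟩ with hj₂
  set I : Ideal (MvPolynomial (Fin m ⊕ Fin 3) k) := Ideal.span {asanumaRel r f} with hI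
  set g₀ : MvPolynomial (Fin m ⊕ Fin 3) k := X (Sum.inl j₂) - C lam with hg₀
  set J : Ideal (MvPolynomial ({i : Fin m // i ≠ j₂} ⊕ Fin 3) k) :=
    Ideal.span {asanumaRelDrop r j₂ lam f} with hJ
  have hIprime : I.IsPrime := (Ideal.Quotient.isDomain_iff_prime I).mp hdom
  have hrelDrop : Prime (asanumaRelDrop r j₂ lam f) := prime_relDrop r j₂ hlam hf
  have hψg₀ : dropHom j₂ lam g₀ = 0 := by
    rw [hg₀, map_sub, dropHom_X_inl, dif_pos rfl]
    simp
  have hψsurj : Function.Surjective (dropHom (k := k) j₂ lam) :=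
    fun b => ⟨dropSec j₂ b, dropHom_dropSec j₂ lam b⟩
  -- the composite map
  set Φ : MvPolynomial (Fin m ⊕ Fin 3) k →ₐ[k]
      (MvPolynomial ({i : Fin m // i ≠ j₂} ⊕ Fin 3) k ⧸ J) :=
    (Ideal.Quotient.mkₐ k J).comp (dropHom j₂ lam) with hΦ
  have hΦsurj : Function.Surjective Φ := by
    intro b
    obtain ⟨b', rfl⟩ := Ideal.Quotient.mkₐ_surjective k J b
    obtain ⟨a', rfl⟩ := hψsurj b'
    exact ⟨a', rfl⟩
  have hkerΦ : RingHom.ker Φ = I ⊔ Ideal.span {g₀} := by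
    apply le_antisymm
    · intro p hp
      have hp' : dropHom j₂ lam p ∈ J := by
        have : Φ p = 0 := hp
        rwa [hΦ, AlgHom.comp_apply, Ideal.Quotient.mkₐ_eq_mk,
          Ideal.Quotient.eq_zero_iff_mem] at this
      obtain ⟨c, hc⟩ := Ideal.mem_span_singleton.mp hp'
      have h5 : dropHom j₂ lam (p - asanumaRel r f * dropSec j₂ c) = 0 := by
        rw [map_sub, map_mul, dropHom_rel, dropHom_dropSec, hc]
        ring
      have h6 : p - asanumaRel r f * dropSec j₂ c ∈ Ideal.span {g₀} := by
        rw [← dropHom_ker j₂ lam]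
        exact h5
      have h7 : asanumaRel r f * dropSec j₂ c ∈ I :=
        Ideal.mul_mem_right _ _ (Ideal.subset_span rfl)
      have hsplit : p = (asanumaRel r f * dropSec j₂ c)
          + (p - asanumaRel r f * dropSec j₂ c) := by ring
      rw [hsplit]
      exact Ideal.add_mem _ (Ideal.mem_sup_left h7) (Ideal.mem_sup_right h6)
    · rw [sup_le_iff]
      constructor
      · rw [hI, Ideal.span_le]
        rintro g rfl
        have : Φ (asanumaRel r f) = 0 := by
          rw [hΦ, AlgHom.comp_apply, Ideal.Quotient.mkₐ_eq_mk, dropHom_rel,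
            Ideal.Quotient.eq_zero_iff_mem]
          exact Ideal.subset_span rfl
        exact RingHom.mem_ker.mpr this
      · rw [Ideal.span_le]
        rintro g rfl
        have : Φ g₀ = 0 := by
          rw [hΦ, AlgHom.comp_apply, hψg₀, map_zero]
        exact RingHom.mem_ker.mpr this
  -- the isomorphism
  have hspan_eq : Ideal.span {(Ideal.Quotient.mk I g₀ : AsanumaRing k r f)}
      = (Ideal.span {g₀}).map (Ideal.Quotient.mkₐ k I) := by
    rw [Ideal.map_span, Set.image_singleton, Ideal.Quotient.mkₐ_eq_mk]
  let e1 : (AsanumaRing k r f ⧸ Ideal.span {(Ideal.Quotient.mk I g₀ : AsanumaRing k r f)})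
      ≃ₐ[k] (AsanumaRing k r f ⧸ (Ideal.span {g₀}).map (Ideal.Quotient.mkₐ k I)) :=
    Ideal.quotientEquivAlgOfEq k hspan_eq
  let e2 := DoubleQuot.quotQuotEquivQuotSupₐ k I (Ideal.span {g₀})
  let e3 : (MvPolynomial (Fin m ⊕ Fin 3) k ⧸ (I ⊔ Ideal.span {g₀}))
      ≃ₐ[k] (MvPolynomial (Fin m ⊕ Fin 3) k ⧸ RingHom.ker Φ) :=
    Ideal.quotientEquivAlgOfEq k hkerΦ.symm
  let e4 := Ideal.quotientKerAlgEquivOfSurjective hΦsurj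
  let E := ((e1.trans e2).trans e3).trans e4
  have hJprime : J.IsPrime := (Ideal.span_singleton_prime hrelDrop.ne_zero).mpr hrelDrop
  haveI hBJdom : IsDomain (MvPolynomial ({i : Fin m // i ≠ j₂} ⊕ Fin 3) k ⧸ J) :=
    (Ideal.Quotient.isDomain_iff_prime J).mpr hJprime
  have hEdom : IsDomain (AsanumaRing k r f
      ⧸ Ideal.span {(Ideal.Quotient.mk I g₀ : AsanumaRing k r f)}) :=
    Function.Injective.isDomain E.toRingEquiv.toRingHom E.injective
  have hg0mk : (Ideal.Quotient.mk I g₀ : AsanumaRing k r f) ≠ 0 := by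
    intro h0
    rw [Ideal.Quotient.eq_zero_iff_mem, hI] at h0
    obtain ⟨q, hq⟩ := Ideal.mem_span_singleton.mp h0
    have hzero : asanumaRelDrop r j₂ lam f * dropHom j₂ lam q = 0 := by
      rw [← dropHom_rel r j₂ lam f, ← map_mul, ← hq, hψg₀]
    have hq0 : dropHom j₂ lam q = 0 :=
      (mul_eq_zero.mp hzero).resolve_left hrelDrop.ne_zero
    have hqmem : q ∈ Ideal.span {g₀} := by
      rw [← dropHom_ker j₂ lam]
      exact hq0
    obtain ⟨s, hs⟩ := Ideal.mem_span_singleton.mp hqmem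
    have hg₀ne : g₀ ≠ 0 := by
      intro h
      have := congrArg constantCoeff h
      rw [hg₀] at this
      simp only [map_sub, constantCoeff_X, constantCoeff_C, map_zero, zero_sub,
        neg_eq_zero] at this
      exact hlam this
    have hcancel : g₀ * 1 = g₀ * (s * asanumaRel r f) := by
      conv_lhs => rw [mul_one, hq, hs]
      ring
    have h1 : (1 : MvPolynomial (Fin m ⊕ Fin 3) k) = s * asanumaRel r f :=
      mul_left_cancel₀ hg₀ne hcancel
    have hunit : IsUnit (asanumaRel r f) :=
      IsUnit.of_mul_eq_one s (by rw [mul_comm]; exact h1.symm)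
    exact hIprime.ne_top (by rw [hI]; exact Ideal.span_singleton_eq_top.mpr hunit)
  refine ⟨?_, ⟨E⟩⟩
  have hsp : (Ideal.span {(Ideal.Quotient.mk I g₀ : AsanumaRing k r f)}).IsPrime :=
    (Ideal.Quotient.isDomain_iff_prime _).mp hEdom
  exact (Ideal.span_singleton_prime hg0mk).mp hsp
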